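/- Let k ≥ 0 and let V_k = {(x,y) ∈ ℤ² : 0 ≤ x ≤ 8·2^k − 4, y ∈ {0,1}} (a 2 × (8·2^k − 3) grid with n = 16·2^k − 6 points). Let d be any metric on V_k such that (i) d((x₁,y₁),(x₂,y₂)) = |x₁ − x₂| + |y₁ − y₂| whenever x₁ = x₂ or y₁ = y₂, and (ii) d((x₁,y₁),(x₂,y₂)) ≥ |x₁ − x₂| for all points. Then there exists an enumeration x₀, x₁, …, x_{n−1} of all points of V_k with x₀ = (0,0) and x_{n−1} = (4·2^k − 2, 1) such that for every index i < n−1 and every point y ∈ V_k not among x₀,…,x_i one has d(x_i, x_{i+1}) ≤ d(x_i, y), and the total length Σ_{i<n−1} d(x_i, x_{i+1}) equals (12 + 4k)·2^k − 3. -/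

import Mathlib

namespace NNRproof

abbrev Pt : Type := ℤ × ℤ

def dist1 (p q : Pt) : ℤ := |p.1 - q.1| + |p.2 - q.2|

def lb (p q : Pt) : ℤ := if p.1 = q.1 ∨ p.2 = q.2 then dist1 p q else |p.1 - q.1|

def shiftP (t : ℤ) (p : Pt) : Pt := (p.1 + t, p.2)

def shiftL (t : ℤ) (l : List Pt) : List Pt := l.map (shiftP t)

/-- Nearest-neighbour admissibility of a list `l` of points with外部 pending set `P`. -/
def NNok : List Pt → List Pt → Prop
  | a :: b :: l, P =>
      ((a.1 = b.1 ∨ a.2 = b.2) ∧ ∀ y ∈ b :: (l ++ P), lb a b ≤ lb a y) ∧ NNok (b :: l) P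
  | _, _ => True

def Steps (C : Pt → Pt → Prop) : List Pt → Prop
  | a :: b :: l => C a b ∧ Steps C (b :: l)
  | _ => True

def Marg (a b : ℤ) (p q : Pt) : Prop := lb p q ≤ p.1 - a ∧ lb p q ≤ b - p.1

def plen : List Pt → ℤ
  | a :: b :: l => dist1 a b + plen (b :: l)
  | _ => 0

instance instDecNNok : ∀ (l P : List Pt), Decidable (NNok l P)
  | [], _ => .isTrue trivial
  | [_], _ => .isTrue trivial
  | a :: b :: l, P => by
      have : Decidable (NNok (b :: l) P) := instDecNNok (b :: l) P
      unfold NNok; infer_instance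

instance instDecSteps (C : Pt → Pt → Prop) [DecidableRel C] :
    ∀ (l : List Pt), Decidable (Steps C l)
  | [] => .isTrue trivial
  | [_] => .isTrue trivial
  | a :: b :: l => by
      have : Decidable (Steps C (b :: l)) := instDecSteps C (b :: l)
      unfold Steps; infer_instance

instance : DecidableRel (Marg a b) := fun p q => by unfold Marg; infer_instance

lemma lb_ge_abs (p q : Pt) : |p.1 - q.1| ≤ lb p q := by
  unfold lb dist1
  split
  · have := abs_nonneg (p.2 - q.2); linarith
  · exact le_refl _

lemma le_lb_left {c : ℤ} {p q : Pt} (h : c ≤ p.1 - q.1) : c ≤ lb p q :=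
  le_trans (le_trans h (le_abs_self _)) (lb_ge_abs p q)

lemma le_lb_right {c : ℤ} {p q : Pt} (h : c ≤ q.1 - p.1) : c ≤ lb p q := by
  refine le_trans ?_ (lb_ge_abs p q)
  rw [abs_sub_comm]
  exact le_trans h (le_abs_self _)

lemma lb_same_row (x₁ x₂ r : ℤ) : lb (x₁, r) (x₂, r) = |x₁ - x₂| := by
  simp [lb, dist1]

lemma shiftP_fst (t : ℤ) (p : Pt) : (shiftP t p).1 = p.1 + t := rfl
lemma shiftP_snd (t : ℤ) (p : Pt) : (shiftP t p).2 = p.2 := rfl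

lemma lb_shift (t : ℤ) (p q : Pt) : lb (shiftP t p) (shiftP t q) = lb p q := by
  unfold lb dist1 shiftP
  simp only []
  have h1 : p.1 + t - (q.1 + t) = p.1 - q.1 := by ring
  have h2 : (p.1 + t = q.1 + t) ↔ p.1 = q.1 := by omega
  simp [h1, h2]

lemma dist1_shift (t : ℤ) (p q : Pt) : dist1 (shiftP t p) (shiftP t q) = dist1 p q := by
  unfold dist1 shiftP
  have h1 : p.1 + t - (q.1 + t) = p.1 - q.1 := by ring
  simp [h1]

lemma shiftP_inj (t : ℤ) : Function.Injective (shiftP t) := by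
  intro p q h
  unfold shiftP at h
  obtain ⟨h1, h2⟩ := Prod.mk.injEq .. ▸ h
  exact Prod.ext (by omega) h2

lemma mem_shiftL {t : ℤ} {l : List Pt} {p : Pt} :
    p ∈ shiftL t l ↔ (p.1 - t, p.2) ∈ l := by
  unfold shiftL
  rw [List.mem_map]
  constructor
  · rintro ⟨q, hq, rfl⟩; simpa [shiftP] using hq
  · intro h; exact ⟨_, h, by simp [shiftP]⟩

lemma plen_shift (t : ℤ) : ∀ l : List Pt, plen (shiftL t l) = plen l
  | [] => rfl
  | [a] => rfl
  | a :: b :: l => by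
      have := plen_shift t (b :: l)
      simp only [shiftL, List.map] at *
      unfold plen
      rw [dist1_shift]
      omega

lemma steps_shift {C C' : Pt → Pt → Prop} (t : ℤ)
    (hC : ∀ p q, C p q → C' (shiftP t p) (shiftP t q)) :
    ∀ l : List Pt, Steps C l → Steps C' (shiftL t l)
  | [] , _ => trivial
  | [a], _ => trivial
  | a :: b :: l, h => by
      obtain ⟨h1, h2⟩ := h
      exact ⟨hC _ _ h1, steps_shift t hC (b :: l) h2⟩

lemma nnok_shift (t : ℤ) : ∀ (l P : List Pt), NNok l P → NNok (shiftL t l) (shiftL t P)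
  | [], _, _ => trivial
  | [a], _, _ => trivial
  | a :: b :: l, P, h => by
      obtain ⟨⟨hax, hy⟩, h2⟩ := h
      refine ⟨⟨?_, ?_⟩, nnok_shift t (b :: l) P h2⟩
      · rcases hax with h | h
        · left; simp [shiftP, h]
        · right; simp [shiftP, h]
      · intro y hy'
        have : y ∈ shiftL t (b :: (l ++ P)) := by
          simpa [shiftL, List.map_append] using hy'
        rw [mem_shiftL] at this
        have hle := hy _ this
        have : y = shiftP t (y.1 - t, y.2) := by simp [shiftP]
        rw [this]
        calc lb (shiftP t a) (shiftP t b) = lb a b := lb_shift ..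
          _ ≤ lb a (y.1 - t, y.2) := hle
          _ = lb (shiftP t a) (shiftP t (y.1 - t, y.2)) := (lb_shift ..).symm

/-- Extend the pending set of an NNok list using margin bounds. -/
lemma nnok_extend {a b : ℤ} : ∀ (l sp P : List Pt), NNok l sp → Steps (Marg a b) l →
    (∀ y ∈ P, y.1 ≤ a ∨ b ≤ y.1 ∨ y ∈ sp) → NNok l P
  | [], _, _, _, _, _ => trivial
  | [x], _, _, _, _, _ => trivial
  | x :: y :: l, sp, P, h, hs, hP => by
      obtain ⟨⟨hax, hy⟩, h2⟩ := h
      obtain ⟨hm, hs2⟩ := hs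
      refine ⟨⟨hax, ?_⟩, nnok_extend (y :: l) sp P h2 hs2 hP⟩
      intro z hz
      rw [List.mem_cons, List.mem_append] at hz
      rcases hz with rfl | hz | hz
      · exact hy _ List.mem_cons_self
      · exact hy _ (by simp [hz])
      · rcases hP z hz with h' | h' | h'
        · exact le_lb_left (by obtain ⟨hm1, _⟩ := hm; omega)
        · exact le_lb_right (by obtain ⟨_, hm2⟩ := hm; omega)
        · exact hy _ (by simp [h'])

lemma nnok_append : ∀ (A : List Pt) (b : Pt) (t SP : List Pt),
    NNok A ((b :: t) ++ SP) → NNok (b :: t) SP →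
    (∀ x, A.getLast? = some x →
      (x.1 = b.1 ∨ x.2 = b.2) ∧ ∀ y ∈ t ++ SP, lb x b ≤ lb x y) →
    NNok (A ++ b :: t) SP
  | [], b, t, SP, _, hB, _ => hB
  | [x], b, t, SP, hA, hB, hj => by
      obtain ⟨hax, hy⟩ := hj x rfl
      exact ⟨⟨hax, by
        intro z hz
        rw [List.mem_cons] at hz
        rcases hz with rfl | hz
        · exact le_refl _
        · exact hy _ hz⟩, hB⟩
  | x :: x' :: A, b, t, SP, hA, hB, hj => by
      obtain ⟨⟨hax, hy⟩, h2⟩ := hA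
      refine ⟨⟨hax, ?_⟩, nnok_append (x' :: A) b t SP h2 hB (by
        intro z hz; exact hj z (by rw [← hz]; rfl))⟩
      intro z hz
      apply hy
      simp only [List.cons_append, List.mem_cons, List.mem_append, List.append_eq] at hz ⊢
      tauto

lemma steps_mono {C C' : Pt → Pt → Prop} (h : ∀ p q, C p q → C' p q) :
    ∀ l, Steps C l → Steps C' l
  | [], _ => trivial
  | [_], _ => trivial
  | a :: b :: l, hs => ⟨h _ _ hs.1, steps_mono h (b :: l) hs.2⟩

lemma steps_append {C : Pt → Pt → Prop} : ∀ (A : List Pt) (b : Pt) (t : List Pt),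
    Steps C A → Steps C (b :: t) →
    (∀ x, A.getLast? = some x → C x b) → Steps C (A ++ b :: t)
  | [], b, t, _, hB, _ => hB
  | [x], b, t, _, hB, hj => ⟨hj x rfl, hB⟩
  | x :: x' :: A, b, t, hA, hB, hj =>
      ⟨hA.1, steps_append (x' :: A) b t hA.2 hB (fun z hz => hj z (by rw [← hz]; rfl))⟩

lemma plen_append : ∀ (A : List Pt) (b : Pt) (t : List Pt) (x : Pt),
    A.getLast? = some x → plen (A ++ b :: t) = plen A + dist1 x b + plen (b :: t)
  | [], _, _, _, h => by simp at h
  | [a], b, t, x, h => by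
      obtain rfl : a = x := by simpa using h
      show dist1 a b + plen (b :: t) = plen [a] + dist1 a b + plen (b :: t)
      simp [plen]
  | a :: a' :: A, b, t, x, h => by
      have h' : (a' :: A).getLast? = some x := by rw [← h]; rfl
      have := plen_append (a' :: A) b t x h'
      show dist1 a a' + plen ((a' :: A) ++ b :: t) = dist1 a a' + plen (a' :: A) + dist1 x b + plen (b :: t)
      omega

lemma head?_append_left : ∀ (A B : List Pt) (x : Pt), A.head? = some x → (A ++ B).head? = some x
  | [], _, _, h => by simp at h
  | a :: A, B, x, h => by simpa using h

lemma getLast?_append_right (A : List Pt) {B : List Pt} {x : Pt} (h : B.getLast? = some x) :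
    (A ++ B).getLast? = some x := by
  rw [List.getLast?_append_of_ne_nil]
  · exact h
  · intro hB; subst hB; simp at h
/-- A good "piece" of a tour. -/
def Piece (l : List Pt) (pred : Pt → Prop) (a b : ℤ) (sp : List Pt)
    (p₀ p₁ : Pt) (m : ℤ) : Prop :=
  l.head? = some p₀ ∧ l.getLast? = some p₁ ∧ l.Nodup ∧
  (∀ p, p ∈ l ↔ pred p) ∧ plen l = m ∧ NNok l sp ∧ Steps (Marg a b) l

lemma piece_congr {l pred pred' a b sp p₀ p₁ m} (h : Piece l pred a b sp p₀ p₁ m)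
    (h' : ∀ p, pred p ↔ pred' p) : Piece l pred' a b sp p₀ p₁ m := by
  obtain ⟨h1, h2, h3, h4, h5, h6, h7⟩ := h
  exact ⟨h1, h2, h3, fun p => (h4 p).trans (h' p), h5, h6, h7⟩

lemma piece_shift {l pred a b sp p₀ p₁ m} (t : ℤ) (h : Piece l pred a b sp p₀ p₁ m) :
    Piece (shiftL t l) (fun p => pred (p.1 - t, p.2)) (a + t) (b + t)
      (shiftL t sp) (shiftP t p₀) (shiftP t p₁) m := by
  obtain ⟨h1, h2, h3, h4, h5, h6, h7⟩ := h
  refine ⟨?_, ?_, ?_, ?_, ?_, ?_, ?_⟩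
  · unfold shiftL; rw [List.head?_map, h1]; rfl
  · unfold shiftL; rw [List.getLast?_map, h2]; rfl
  · exact h3.map (shiftP_inj t)
  · intro p; rw [mem_shiftL]; exact h4 _
  · rw [plen_shift]; exact h5
  · exact nnok_shift t _ _ h6
  · refine steps_shift t ?_ l h7
    intro p q hpq
    obtain ⟨hm1, hm2⟩ := hpq
    constructor
    · rw [lb_shift, shiftP_fst]; omega
    · rw [lb_shift, shiftP_fst]; omega

lemma piece_single (p : Pt) (a b : ℤ) (sp : List Pt) :
    Piece [p] (fun q => q = p) a b sp p p 0 := by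
  refine ⟨rfl, rfl, by simp, by simp, rfl, trivial, trivial⟩

/-- The master gluing lemma. -/
lemma piece_glue {A B : List Pt} {predA predB : Pt → Prop}
    {aA bA aB bB a c : ℤ} {spA spB SP : List Pt}
    {fA lA fB lB : Pt} {mA mB m : ℤ}
    (hA : Piece A predA aA bA spA fA lA mA)
    (hB : Piece B predB aB bB spB fB lB mB)
    (hdis : ∀ p, predA p → predB p → False)
    (haA : a ≤ aA) (hbA : bA ≤ c) (haB : a ≤ aB) (hbB : bB ≤ c)
    (hctxB : ∀ p, predB p → p.1 ≤ aA ∨ bA ≤ p.1 ∨ p ∈ spA)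
    (hctxSP_A : ∀ y ∈ SP, y.1 ≤ aA ∨ bA ≤ y.1 ∨ y ∈ spA)
    (hctxSP_B : ∀ y ∈ SP, y.1 ≤ aB ∨ bB ≤ y.1 ∨ y ∈ spB)
    (hax : lA.1 = fB.1 ∨ lA.2 = fB.2)
    (hjB : ∀ p, predB p → lb lA fB ≤ lb lA p)
    (hjSP : ∀ y ∈ SP, lb lA fB ≤ lb lA y)
    (hjm : Marg a c lA fB)
    (hm : mA + dist1 lA fB + mB = m) :
    Piece (A ++ B) (fun p => predA p ∨ predB p) a c SP fA lB m := by
  obtain ⟨hA1, hA2, hA3, hA4, hA5, hA6, hA7⟩ := hA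
  obtain ⟨hB1, hB2, hB3, hB4, hB5, hB6, hB7⟩ := hB
  obtain ⟨tt, rfl⟩ : ∃ tt, B = fB :: tt := by
    cases B with
    | nil => simp at hB1
    | cons bb tt => exact ⟨tt, by simp at hB1; rw [hB1]⟩
  refine ⟨head?_append_left _ _ _ hA1, getLast?_append_right _ hB2, ?_, ?_, ?_, ?_, ?_⟩
  · refine hA3.append hB3 ?_
    intro p hpA hpB
    exact hdis p ((hA4 p).1 hpA) ((hB4 p).1 hpB)
  · intro p
    rw [List.mem_append, hA4, hB4]
  · rw [plen_append A fB tt lA hA2, hA5, hB5]; exact hm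
  · -- NNok (A ++ fB :: tt) SP
    refine nnok_append A fB tt SP ?_ ?_ ?_
    · refine nnok_extend A spA _ hA6 hA7 ?_
      intro y hy
      rw [List.mem_append] at hy
      rcases hy with hy | hy
      · exact hctxB y ((hB4 y).1 hy)
      · exact hctxSP_A y hy
    · refine nnok_extend _ spB _ hB6 hB7 hctxSP_B
    · intro x hx
      have hx' : x = lA := by rw [hA2] at hx; exact (Option.some_inj.mp hx).symm
      subst hx'
      refine ⟨hax, ?_⟩
      intro y hy
      rw [List.mem_append] at hy
      rcases hy with hy | hy
      · exact hjB y ((hB4 y).1 (by simp [hy]))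
      · exact hjSP y hy
  · refine steps_append A fB tt ?_ ?_ ?_
    · refine steps_mono ?_ A hA7
      intro p q ⟨h1, h2⟩; exact ⟨by omega, by omega⟩
    · refine steps_mono ?_ _ hB7
      intro p q ⟨h1, h2⟩; exact ⟨by omega, by omega⟩
    · intro x hx
      have hx' : x = lA := by rw [hA2] at hx; exact (Option.some_inj.mp hx).symm
      subst hx'
      exact hjm
/-! ### Helper evaluation lemmas -/

lemma lb_row_eval {x₁ x₂ r c : ℤ} (h : x₂ - x₁ = c) (hc : 0 ≤ c) : lb (x₁,r) (x₂,r) = c := by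
  rw [lb_same_row, abs_sub_comm, h, abs_of_nonneg hc]

lemma dist1_row_eval {x₁ x₂ r c : ℤ} (h : x₂ - x₁ = c) (hc : 0 ≤ c) : dist1 (x₁,r) (x₂,r) = c := by
  unfold dist1
  simp only [sub_self, abs_zero, add_zero]
  rw [abs_sub_comm, h, abs_of_nonneg hc]

lemma lb_row_eval' {x₁ x₂ r c : ℤ} (h : x₁ - x₂ = c) (hc : 0 ≤ c) : lb (x₁,r) (x₂,r) = c := by
  rw [lb_same_row, h, abs_of_nonneg hc]

lemma dist1_row_eval' {x₁ x₂ r c : ℤ} (h : x₁ - x₂ = c) (hc : 0 ≤ c) : dist1 (x₁,r) (x₂,r) = c := by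
  unfold dist1
  simp only [sub_self, abs_zero, add_zero]
  rw [h, abs_of_nonneg hc]

/-! ### nnok sp monotone -/
lemma nnok_mono_sp : ∀ (l sp sp' : List Pt), NNok l sp → (∀ y ∈ sp', y ∈ sp) → NNok l sp'
  | [], _, _, _, _ => trivial
  | [_], _, _, _, _ => trivial
  | a :: b :: l, sp, sp', h, hss => by
      obtain ⟨⟨hax, hy⟩, h2⟩ := h
      refine ⟨⟨hax, ?_⟩, nnok_mono_sp (b :: l) sp sp' h2 hss⟩
      intro z hz
      rw [List.mem_cons, List.mem_append] at hz
      rcases hz with rfl | hz | hz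
      · exact hy _ List.mem_cons_self
      · exact hy _ (by simp [hz])
      · exact hy _ (by simp [hss z hz])

lemma piece_sp {l pred a b sp sp' p₀ p₁ m} (h : Piece l pred a b sp p₀ p₁ m)
    (hss : ∀ y ∈ sp', y ∈ sp) : Piece l pred a b sp' p₀ p₁ m := by
  obtain ⟨h1, h2, h3, h4, h5, h6, h7⟩ := h
  exact ⟨h1, h2, h3, h4, h5, nnok_mono_sp _ _ _ h6 hss, h7⟩

/-! ### Base tours -/

def T0 : List Pt := [(0,0),(0,1),(1,1),(1,0),(2,0),(3,0),(4,0),(4,1),(3,1),(2,1)]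
def R0 : List Pt := [(0,1),(0,0),(1,0),(2,0),(2,1),(3,1),(3,0),(4,0),(5,0),(6,0),(7,0),(7,1),(6,1),(5,1),(4,1),(1,1)]
def Q1 : List Pt := [(0,0),(1,0),(1,1),(2,1),(2,0),(3,0),(3,1),(4,1),(4,0),(5,0),(5,1),(6,1),(7,1),(7,0),(6,0)]
def P1 : List Pt := [(0,1),(0,0),(1,0),(2,0),(2,1),(3,1),(3,0),(4,0),(5,0),(5,1),(4,1),(6,1),(7,1),(7,0),(6,0)]
def E1 : List Pt := [(0,0),(1,0),(1,1),(2,1),(2,0),(3,0),(4,0),(5,0),(6,0),(7,0),(7,1),(6,1),(5,1),(4,1),(3,1),(0,1)]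
def Ep1 : List Pt := [(0,0),(1,0),(1,1),(2,1),(2,0),(3,0),(4,0),(5,0),(6,0),(6,1),(5,1),(4,1),(3,1),(0,1)]
def Epe1 : List Pt := [(0,0),(1,0),(1,1),(2,1),(2,0),(3,0),(4,0),(5,0),(5,1),(4,1),(3,1),(0,1)]
def Qp1 : List Pt := [(0,0),(1,0),(1,1),(2,1),(3,1),(3,0),(2,0),(4,0),(4,1),(5,1),(6,1),(6,0),(5,0)]
def tail0 : List Pt := [(0,1),(1,1),(1,0),(0,0)]

/-! ### The recursive families -/

mutual
def QL : ℕ → List Pt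
  | 0 => Q1
  | j+1 => QL j ++ shiftL (8*2^j) (EpeL j ++ shiftL (8*2^j - 2) tail0)
def QpL : ℕ → List Pt
  | 0 => Qp1
  | j+1 => QpL j ++ shiftL (8*2^j - 1) (EpeL j ++ shiftL (8*2^j - 2) tail0)
def PL : ℕ → List Pt
  | 0 => P1
  | j+1 => PL j ++ shiftL (8*2^j) (EpeL j ++ shiftL (8*2^j - 2) tail0)
def EL : ℕ → List Pt
  | 0 => E1
  | j+1 => QL j ++ shiftL (8*2^j) (EL j) ++ [(0,1)]
def EpL : ℕ → List Pt
  | 0 => Ep1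
  | j+1 => QpL j ++ shiftL (8*2^j - 1) (EL j) ++ [(0,1)]
def EpeL : ℕ → List Pt
  | 0 => Epe1
  | j+1 => QpL j ++ shiftL (8*2^j - 1) (EpL j) ++ [(0,1)]
end

def SL (j : ℕ) : List Pt := EpeL j ++ shiftL (8*2^j - 2) tail0

def RL : ℕ → List Pt
  | 0 => R0
  | j+1 => PL j ++ shiftL (8*2^j) (EL j) ++ [(1,1)]

def TL : ℕ → List Pt
  | 0 => T0
  | k+1 => TL k ++ shiftL (8*2^k - 3) (RL k)

/-! ### Path lengths -/

def mQ (j : ℕ) : ℤ := (4*j+16)*2^j - 2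
def mQp (j : ℕ) : ℤ := (4*j+16)*2^j - 3
def mP (j : ℕ) : ℤ := (4*j+16)*2^j - 1
def mE (j : ℕ) : ℤ := (4*j+16)*2^j + 1
def mEp (j : ℕ) : ℤ := (4*j+16)*2^j - 1
def mEpe (j : ℕ) : ℤ := (4*j+16)*2^j - 3
def mS (j : ℕ) : ℤ := (4*j+24)*2^j - 2
def mR (j : ℕ) : ℤ := (4*j+16)*2^j + 1
def mT (k : ℕ) : ℤ := (4*k+12)*2^k - 3

/-! ### Membership predicates -/

def full (w : ℤ) (p : Pt) : Prop := 0 ≤ p.1 ∧ p.1 ≤ w - 1 ∧ (p.2 = 0 ∨ p.2 = 1)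

instance (w : ℤ) (p : Pt) : Decidable (full w p) := by unfold full; infer_instance

/-! ### Base case facts -/

lemma mem_T0 : ∀ p, p ∈ T0 ↔ full 5 p := by
  intro ⟨x, y⟩
  constructor
  · intro h; fin_cases h <;> decide
  · rintro ⟨h0, h1, hy⟩
    simp only at h0 h1
    interval_cases x <;> rcases hy with rfl | rfl <;> decide

lemma mem_R0 : ∀ p, p ∈ R0 ↔ full 8 p := by
  intro ⟨x, y⟩
  constructor
  · intro h; fin_cases h <;> decide
  · rintro ⟨h0, h1, hy⟩
    simp only at h0 h1
    interval_cases x <;> rcases hy with rfl | rfl <;> decide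

lemma mem_Q1 : ∀ p, p ∈ Q1 ↔ (full 8 p ∧ p ≠ (0,1)) := by
  intro ⟨x, y⟩
  constructor
  · intro h; fin_cases h <;> decide
  · rintro ⟨⟨h0, h1, hy⟩, hne⟩
    simp only at h0 h1
    interval_cases x <;> rcases hy with rfl | rfl <;> first | decide | (exact absurd rfl hne)

lemma mem_Qp1 : ∀ p, p ∈ Qp1 ↔ (full 7 p ∧ p ≠ (0,1)) := by
  intro ⟨x, y⟩
  constructor
  · intro h; fin_cases h <;> decide
  · rintro ⟨⟨h0, h1, hy⟩, hne⟩
    simp only at h0 h1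
    interval_cases x <;> rcases hy with rfl | rfl <;> first | decide | (exact absurd rfl hne)

lemma mem_P1 : ∀ p, p ∈ P1 ↔ (full 8 p ∧ p ≠ (1,1)) := by
  intro ⟨x, y⟩
  constructor
  · intro h; fin_cases h <;> decide
  · rintro ⟨⟨h0, h1, hy⟩, hne⟩
    simp only at h0 h1
    interval_cases x <;> rcases hy with rfl | rfl <;> first | decide | (exact absurd rfl hne)

lemma mem_E1 : ∀ p, p ∈ E1 ↔ full 8 p := by
  intro ⟨x, y⟩
  constructor
  · intro h; fin_cases h <;> decide
  · rintro ⟨h0, h1, hy⟩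
    simp only at h0 h1
    interval_cases x <;> rcases hy with rfl | rfl <;> decide

lemma mem_Ep1 : ∀ p, p ∈ Ep1 ↔ full 7 p := by
  intro ⟨x, y⟩
  constructor
  · intro h; fin_cases h <;> decide
  · rintro ⟨h0, h1, hy⟩
    simp only at h0 h1
    interval_cases x <;> rcases hy with rfl | rfl <;> decide

lemma mem_Epe1 : ∀ p, p ∈ Epe1 ↔ full 6 p := by
  intro ⟨x, y⟩
  constructor
  · intro h; fin_cases h <;> decide
  · rintro ⟨h0, h1, hy⟩
    simp only at h0 h1
    interval_cases x <;> rcases hy with rfl | rfl <;> decide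

lemma mem_tail0 : ∀ p, p ∈ tail0 ↔ full 2 p := by
  intro ⟨x, y⟩
  constructor
  · intro h; fin_cases h <;> decide
  · rintro ⟨h0, h1, hy⟩
    simp only at h0 h1
    interval_cases x <;> rcases hy with rfl | rfl <;> decide

lemma piece_T0 : Piece T0 (full 5) (-1) 5 [] (0,0) (2,1) (mT 0) := by
  refine ⟨by decide, by decide, by decide, mem_T0, by decide, by decide, by decide⟩

lemma piece_R0 : Piece R0 (full 8) (-1) 8 [] (0,1) (1,1) (mR 0) := by
  refine ⟨by decide, by decide, by decide, mem_R0, by decide, by decide, by decide⟩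

lemma piece_Q1 : Piece Q1 (fun p => full 8 p ∧ p ≠ (0,1)) (-1) 8 [(0,1)] (0,0) (6,0) (mQ 0) := by
  refine ⟨by decide, by decide, by decide, mem_Q1, by decide, by decide, by decide⟩

lemma piece_Qp1 : Piece Qp1 (fun p => full 7 p ∧ p ≠ (0,1)) (-1) 7 [(0,1)] (0,0) (5,0) (mQp 0) := by
  refine ⟨by decide, by decide, by decide, mem_Qp1, by decide, by decide, by decide⟩

lemma piece_P1 : Piece P1 (fun p => full 8 p ∧ p ≠ (1,1)) (-1) 8 [(1,1)] (0,1) (6,0) (mP 0) := by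
  refine ⟨by decide, by decide, by decide, mem_P1, by decide, by decide, by decide⟩

lemma piece_E1 : Piece E1 (full 8) (-1) 8 [(0,1)] (0,0) (0,1) (mE 0) := by
  refine ⟨by decide, by decide, by decide, mem_E1, by decide, by decide, by decide⟩

lemma piece_Ep1 : Piece Ep1 (full 7) (-1) 7 [(0,1)] (0,0) (0,1) (mEp 0) := by
  refine ⟨by decide, by decide, by decide, mem_Ep1, by decide, by decide, by decide⟩

lemma piece_Epe1 : Piece Epe1 (full 6) (-1) 6 [(0,1)] (0,0) (0,1) (mEpe 0) := by
  refine ⟨by decide, by decide, by decide, mem_Epe1, by decide, by decide, by decide⟩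

lemma piece_tail0 : Piece tail0 (full 2) (-1) 2 [] (0,1) (0,0) 3 := by
  refine ⟨by decide, by decide, by decide, mem_tail0, by decide, by decide, by decide⟩
lemma shiftP_mk (t x y : ℤ) : shiftP t (x, y) = (x + t, y) := rfl

lemma piece_cast {l l' pred pred' a b sp p₀ p₀' p₁ p₁' m m'}
    (h : Piece l pred a b sp p₀ p₁ m) (hl : l = l')
    (hpred : ∀ p, pred p ↔ pred' p) (h₀ : p₀ = p₀') (h₁ : p₁ = p₁') (hm : m = m') :
    Piece l' pred' a b sp p₀' p₁' m' := by
  subst hl h₀ h₁ hm; exact piece_congr h hpred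

lemma piece_castab {l pred a a' b b' sp p₀ p₁ m}
    (h : Piece l pred a b sp p₀ p₁ m) (ha : a = a') (hb : b = b') :
    Piece l pred a' b' sp p₀ p₁ m := by subst ha hb; exact h

/-! ### Abbreviations for the family statements -/

def PQ (j : ℕ) : Prop := Piece (QL j) (fun p => full (8*2^j) p ∧ p ≠ (0,1)) (-1) (8*2^j) [(0,1)] (0,0) (8*2^j - 2, 0) (mQ j)
def PQp (j : ℕ) : Prop := Piece (QpL j) (fun p => full (8*2^j-1) p ∧ p ≠ (0,1)) (-1) (8*2^j-1) [(0,1)] (0,0) (8*2^j - 3, 0) (mQp j)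
def PP (j : ℕ) : Prop := Piece (PL j) (fun p => full (8*2^j) p ∧ p ≠ (1,1)) (-1) (8*2^j) [(1,1)] (0,1) (8*2^j - 2, 0) (mP j)
def PE (j : ℕ) : Prop := Piece (EL j) (full (8*2^j)) (-1) (8*2^j) [(0,1)] (0,0) (0,1) (mE j)
def PEp (j : ℕ) : Prop := Piece (EpL j) (full (8*2^j-1)) (-1) (8*2^j-1) [(0,1)] (0,0) (0,1) (mEp j)
def PEpe (j : ℕ) : Prop := Piece (EpeL j) (full (8*2^j-2)) (-1) (8*2^j-2) [(0,1)] (0,0) (0,1) (mEpe j)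
def PS (j : ℕ) : Prop := Piece (SL j) (full (8*2^j)) (2-8*2^j) (8*2^j) [] (0,0) (8*2^j-2, 0) (mS j)
def PR (j : ℕ) : Prop := Piece (RL j) (full (8*2^j)) (-1) (8*2^j) [] (0,1) (1,1) (mR j)
def PT (k : ℕ) : Prop := Piece (TL k) (full (8*2^k-3)) (-1) (8*2^k-3) [] (0,0) (4*2^k-2, 1) (mT k)


lemma pS {j : ℕ} (h : PEpe j) : PS j := by
  have hz : (0:ℤ) < 2^j := pow_pos (by norm_num) j
  have htail := piece_shift (8*2^j - 2) piece_tail0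
  refine piece_cast (piece_glue h htail ?dis ?haA ?hbA ?haB ?hbB ?ctxB ?ctxA ?ctxB2 ?ax ?jB ?jSP ?jm ?hm) rfl ?pred rfl ?last rfl
  case dis =>
    rintro ⟨x, y⟩ hA hB
    obtain ⟨_, h1, _⟩ := hA
    obtain ⟨h2, _, _⟩ := hB
    omega
  case haA => omega
  case hbA => omega
  case haB => omega
  case hbB => omega
  case ctxB =>
    rintro ⟨x, y⟩ hB
    obtain ⟨h2, _, _⟩ := hB
    right; left; omega
  case ctxA => intro y hy; simp at hy
  case ctxB2 => intro y hy; simp at hy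
  case ax => right; rfl
  case jB =>
    rintro ⟨x, y⟩ hB
    obtain ⟨h2, _, _⟩ := hB
    rw [shiftP_mk, lb_row_eval (c := 8*2^j - 2) (by ring) (by omega)]
    exact le_lb_right (by omega)
  case jSP => intro y hy; simp at hy
  case jm =>
    rw [shiftP_mk]
    constructor
    · rw [lb_row_eval (c := 8*2^j - 2) (by ring) (by omega)]; omega
    · rw [lb_row_eval (c := 8*2^j - 2) (by ring) (by omega)]; omega
  case hm =>
    rw [shiftP_mk, dist1_row_eval (c := 8*2^j - 2) (by ring) (by omega)]
    unfold mEpe mS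
    ring
  case pred =>
    rintro ⟨x, y⟩
    simp only [full]
    constructor
    · rintro (⟨h1, h2, h3⟩ | ⟨h1, h2, h3⟩) <;> exact ⟨by omega, by omega, by simpa using h3⟩
    · rintro ⟨h1, h2, h3⟩
      rcases le_or_gt x (8*2^j - 3) with h | h
      · left; exact ⟨by omega, by omega, h3⟩
      · right; exact ⟨by omega, by omega, h3⟩
  case last => rw [shiftP_mk]; exact Prod.ext (by ring) rfl

/-! ### chain steps for Q, Q', P -/

lemma pQstep {j : ℕ} (hQ : PQ j) (hS : PS j) : PQ (j+1) := by
  have hz : (0:ℤ) < 2^j := pow_pos (by norm_num) j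
  have h2 : ((2:ℤ))^(j+1) = 2^j * 2 := pow_succ 2 j
  have hSsh := piece_shift (8*2^j) hS
  show Piece (QL j ++ shiftL (8*2^j) (SL j)) _ _ _ _ _ _ _
  refine piece_cast (piece_glue hQ hSsh ?dis ?haA ?hbA ?haB ?hbB ?ctxB ?ctxA ?ctxB2 ?ax ?jB ?jSP ?jm ?hm) rfl ?pred rfl ?last rfl
  case dis =>
    rintro ⟨x, y⟩ ⟨⟨h1, h1', _⟩, _⟩ ⟨h2', _, _⟩
    omega
  case haA => omega
  case hbA => rw [h2]; omega
  case haB => omega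
  case hbB => rw [h2]; omega
  case ctxB =>
    rintro ⟨x, y⟩ ⟨h2', _, _⟩
    right; left; omega
  case ctxA =>
    intro y hy
    right; right; exact hy
  case ctxB2 =>
    intro y hy
    simp only [List.mem_singleton] at hy
    subst hy
    left; omega
  case ax => right; rfl
  case jB =>
    rintro ⟨x, y⟩ ⟨h2', _, _⟩
    rw [shiftP_mk, lb_row_eval (c := 2) (by ring) (by norm_num)]
    exact le_lb_right (by omega)
  case jSP =>
    intro y hy
    simp only [List.mem_singleton] at hy
    subst hy
    rw [shiftP_mk, lb_row_eval (c := 2) (by ring) (by norm_num)]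
    exact le_lb_left (by omega)
  case jm =>
    rw [shiftP_mk]
    constructor
    · rw [lb_row_eval (c := 2) (by ring) (by norm_num)]; omega
    · rw [lb_row_eval (c := 2) (by ring) (by norm_num)]; rw [h2]; omega
  case hm =>
    rw [shiftP_mk, dist1_row_eval (c := 2) (by ring) (by norm_num)]
    unfold mQ mS
    push_cast [pow_succ]
    ring
  case pred =>
    rintro ⟨x, y⟩
    simp only [full, ne_eq, Prod.mk.injEq, not_and]
    rw [h2]
    constructor
    · rintro (⟨⟨u1, u2, u3⟩, u4⟩ | ⟨u1, u2, u3⟩)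
      · exact ⟨⟨by omega, by omega, u3⟩, by tauto⟩
      · refine ⟨⟨by omega, by omega, by omega⟩, by omega⟩
    · rintro ⟨⟨u1, u2, u3⟩, u4⟩
      rcases le_or_gt x (8*2^j - 1) with h | h
      · left; exact ⟨⟨by omega, by omega, u3⟩, by tauto⟩
      · right; exact ⟨by omega, by omega, by omega⟩
  case last => rw [shiftP_mk]; exact Prod.ext (by rw [h2]; ring) rfl


lemma pQpstep {j : ℕ} (hQp : PQp j) (hS : PS j) : PQp (j+1) := by
  have hz : (0:ℤ) < 2^j := pow_pos (by norm_num) j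
  have h2 : ((2:ℤ))^(j+1) = 2^j * 2 := pow_succ 2 j
  have hSsh := piece_shift (8*2^j - 1) hS
  show Piece (QpL j ++ shiftL (8*2^j - 1) (SL j)) _ _ _ _ _ _ _
  refine piece_cast (piece_glue hQp hSsh ?dis ?haA ?hbA ?haB ?hbB ?ctxB ?ctxA ?ctxB2 ?ax ?jB ?jSP ?jm ?hm) rfl ?pred rfl ?last rfl
  case dis => rintro ⟨x, y⟩ ⟨⟨h1, h1', _⟩, _⟩ ⟨h2', _, _⟩; omega
  case haA => omega
  case hbA => rw [h2]; omega
  case haB => omega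
  case hbB => rw [h2]; omega
  case ctxB => rintro ⟨x, y⟩ ⟨h2', _, _⟩; right; left; omega
  case ctxA => intro y hy; right; right; exact hy
  case ctxB2 =>
    intro y hy; simp only [List.mem_singleton] at hy; subst hy; left; omega
  case ax => right; rfl
  case jB =>
    rintro ⟨x, y⟩ ⟨h2', _, _⟩
    rw [shiftP_mk, lb_row_eval (c := 2) (by ring) (by norm_num)]
    exact le_lb_right (by omega)
  case jSP =>
    intro y hy; simp only [List.mem_singleton] at hy; subst hy
    rw [shiftP_mk, lb_row_eval (c := 2) (by ring) (by norm_num)]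
    exact le_lb_left (by omega)
  case jm =>
    rw [shiftP_mk]
    constructor
    · rw [lb_row_eval (c := 2) (by ring) (by norm_num)]; omega
    · rw [lb_row_eval (c := 2) (by ring) (by norm_num)]; rw [h2]; omega
  case hm =>
    rw [shiftP_mk, dist1_row_eval (c := 2) (by ring) (by norm_num)]
    unfold mQp mS
    push_cast [pow_succ]
    ring
  case pred =>
    rintro ⟨x, y⟩
    simp only [full, ne_eq, Prod.mk.injEq, not_and]
    rw [h2]
    constructor
    · rintro (⟨⟨u1, u2, u3⟩, u4⟩ | ⟨u1, u2, u3⟩)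
      · exact ⟨⟨by omega, by omega, u3⟩, by tauto⟩
      · refine ⟨⟨by omega, by omega, by omega⟩, by omega⟩
    · rintro ⟨⟨u1, u2, u3⟩, u4⟩
      rcases le_or_gt x (8*2^j - 2) with h | h
      · left; exact ⟨⟨by omega, by omega, u3⟩, by tauto⟩
      · right; exact ⟨by omega, by omega, by omega⟩
  case last => rw [shiftP_mk]; exact Prod.ext (by rw [h2]; ring) rfl

lemma pPstep {j : ℕ} (hP : PP j) (hS : PS j) : PP (j+1) := by
  have hz : (0:ℤ) < 2^j := pow_pos (by norm_num) j
  have h2 : ((2:ℤ))^(j+1) = 2^j * 2 := pow_succ 2 j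
  have hSsh := piece_shift (8*2^j) hS
  show Piece (PL j ++ shiftL (8*2^j) (SL j)) _ _ _ _ _ _ _
  refine piece_cast (piece_glue hP hSsh ?dis ?haA ?hbA ?haB ?hbB ?ctxB ?ctxA ?ctxB2 ?ax ?jB ?jSP ?jm ?hm) rfl ?pred rfl ?last rfl
  case dis => rintro ⟨x, y⟩ ⟨⟨h1, h1', _⟩, _⟩ ⟨h2', _, _⟩; omega
  case haA => omega
  case hbA => rw [h2]; omega
  case haB => omega
  case hbB => rw [h2]; omega
  case ctxB => rintro ⟨x, y⟩ ⟨h2', _, _⟩; right; left; omega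
  case ctxA => intro y hy; right; right; exact hy
  case ctxB2 =>
    intro y hy; simp only [List.mem_singleton] at hy; subst hy; left; omega
  case ax => right; rfl
  case jB =>
    rintro ⟨x, y⟩ ⟨h2', _, _⟩
    rw [shiftP_mk, lb_row_eval (c := 2) (by ring) (by norm_num)]
    exact le_lb_right (by omega)
  case jSP =>
    intro y hy; simp only [List.mem_singleton] at hy; subst hy
    rw [shiftP_mk, lb_row_eval (c := 2) (by ring) (by norm_num)]
    exact le_lb_left (by omega)
  case jm =>
    rw [shiftP_mk]
    constructor
    · rw [lb_row_eval (c := 2) (by ring) (by norm_num)]; omega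
    · rw [lb_row_eval (c := 2) (by ring) (by norm_num)]; rw [h2]; omega
  case hm =>
    rw [shiftP_mk, dist1_row_eval (c := 2) (by ring) (by norm_num)]
    unfold mP mS
    push_cast [pow_succ]
    ring
  case pred =>
    rintro ⟨x, y⟩
    simp only [full, ne_eq, Prod.mk.injEq, not_and]
    rw [h2]
    constructor
    · rintro (⟨⟨u1, u2, u3⟩, u4⟩ | ⟨u1, u2, u3⟩)
      · exact ⟨⟨by omega, by omega, u3⟩, by tauto⟩
      · refine ⟨⟨by omega, by omega, by omega⟩, by omega⟩
    · rintro ⟨⟨u1, u2, u3⟩, u4⟩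
      rcases le_or_gt x (8*2^j - 1) with h | h
      · left; exact ⟨⟨by omega, by omega, u3⟩, by tauto⟩
      · right; exact ⟨by omega, by omega, by omega⟩
  case last => rw [shiftP_mk]; exact Prod.ext (by rw [h2]; ring) rfl


/-- generic second glue: append the single return point `q` at the end. -/
lemma glue_ret {L : List Pt} {pred : Pt → Prop} {a c : ℤ} {sp : List Pt} {f lA q : Pt} {m m' : ℤ}
    (hL : Piece L pred a c sp f lA m)
    (hq : ∀ p, pred p → ¬ p = q)
    (hqsp : q ∈ sp)
    (hax : lA.1 = q.1 ∨ lA.2 = q.2)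
    (hjm : Marg a c lA q)
    (hSP : ∀ y ∈ sp, y = q)
    (hm : m + dist1 lA q = m') :
    Piece (L ++ [q]) (fun p => pred p ∨ p = q) a c sp f q m' := by
  have hsingle := piece_single q a c sp
  refine piece_cast (piece_glue hL hsingle ?_ le_rfl le_rfl le_rfl le_rfl ?_ ?_ ?_ hax ?_ ?_ hjm (by omega)) rfl (fun p => Iff.rfl) rfl rfl rfl
  · intro p hp hp'; exact hq p hp hp'
  · intro p hp; right; right; rw [hp]; exact hqsp
  · intro y hy; right; right; exact (hSP y hy) ▸ hqsp
  · intro y hy; right; right; rw [hSP y hy]; exact hqsp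
  · intro p hp; rw [hp]
  · intro y hy; rw [hSP y hy]

lemma pEstep {j : ℕ} (hQ : PQ j) (hE : PE j) : PE (j+1) := by
  have hz : (0:ℤ) < 2^j := pow_pos (by norm_num) j
  have h2 : ((2:ℤ))^(j+1) = 2^j * 2 := pow_succ 2 j
  have hEsh := piece_shift (8*2^j) hE
  have hmid := piece_glue (SP := [((0:ℤ),(1:ℤ))]) (a := -1) (c := 8*2^(j+1)) hQ hEsh ?dis ?haA ?hbA ?haB ?hbB ?ctxB ?ctxA ?ctxB2 ?ax ?jB ?jSP ?jm (m := mQ j + 2 + mE j) ?hm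
  case dis => rintro ⟨x, y⟩ ⟨⟨h1, h1', _⟩, _⟩ ⟨h2', _, _⟩; omega
  case haA => omega
  case hbA => rw [h2]; omega
  case haB => omega
  case hbB => rw [h2]; omega
  case ctxB => rintro ⟨x, y⟩ ⟨h2', _, _⟩; right; left; omega
  case ctxA => intro y hy; right; right; exact hy
  case ctxB2 =>
    intro y hy; simp only [List.mem_singleton] at hy; subst hy; left; omega
  case ax => right; rfl
  case jB =>
    rintro ⟨x, y⟩ ⟨h2', _, _⟩
    rw [shiftP_mk, lb_row_eval (c := 2) (by ring) (by norm_num)]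
    exact le_lb_right (by omega)
  case jSP =>
    intro y hy; simp only [List.mem_singleton] at hy; subst hy
    rw [shiftP_mk, lb_row_eval (c := 2) (by ring) (by norm_num)]
    exact le_lb_left (by omega)
  case jm =>
    rw [shiftP_mk]
    constructor
    · rw [lb_row_eval (c := 2) (by ring) (by norm_num)]; omega
    · rw [lb_row_eval (c := 2) (by ring) (by norm_num)]; rw [h2]; omega
  case hm => rw [shiftP_mk, dist1_row_eval (c := 2) (by ring) (by norm_num)]
  -- second glue: return to (0,1)
  show Piece ((QL j ++ shiftL (8*2^j) (EL j)) ++ [((0:ℤ),(1:ℤ))]) _ _ _ _ _ _ _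
  refine piece_cast (glue_ret hmid ?hq ?hqsp ?hax ?hjm ?hSP ?hm2) rfl ?pred rfl rfl rfl
  case hq =>
    rintro ⟨x, y⟩ (⟨⟨h1, h1', _⟩, h4⟩ | ⟨h1', _, _⟩) hp
    · exact h4 hp
    · rw [Prod.mk.injEq] at hp; omega
  case hqsp => exact List.mem_singleton.mpr rfl
  case hax => right; rfl
  case hjm =>
    rw [shiftP_mk]
    constructor
    · rw [lb_row_eval' (c := 8*2^j) (by ring) (by omega)]; omega
    · rw [lb_row_eval' (c := 8*2^j) (by ring) (by omega)]; rw [h2]; omega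
  case hSP => intro y hy; simpa using hy
  case hm2 =>
    rw [shiftP_mk, dist1_row_eval' (c := 8*2^j) (by ring) (by omega)]
    unfold mQ mE
    push_cast [pow_succ]
    ring
  case pred =>
    rintro ⟨x, y⟩
    simp only [full, ne_eq, Prod.mk.injEq, not_and]
    rw [h2]
    constructor
    · rintro ((⟨⟨u1, u2, u3⟩, u4⟩ | ⟨u1, u2, u3⟩) | h)
      · exact ⟨by omega, by omega, u3⟩
      · exact ⟨by omega, by omega, by omega⟩
      · exact ⟨by omega, by omega, by omega⟩
    · rintro ⟨u1, u2, u3⟩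
      rcases le_or_gt x (8*2^j - 1) with h | h
      · by_cases h01 : x = 0 ∧ y = 1
        · right; omega
        · left; left; exact ⟨⟨by omega, by omega, u3⟩, by tauto⟩
      · left; right; exact ⟨by omega, by omega, by omega⟩

lemma pEpstep {j : ℕ} (hQp : PQp j) (hE : PE j) : PEp (j+1) := by
  have hz : (0:ℤ) < 2^j := pow_pos (by norm_num) j
  have h2 : ((2:ℤ))^(j+1) = 2^j * 2 := pow_succ 2 j
  have hEsh := piece_shift (8*2^j - 1) hE
  have hmid := piece_glue (SP := [((0:ℤ),(1:ℤ))]) (a := -1) (c := 8*2^(j+1) - 1) hQp hEsh ?dis ?haA ?hbA ?haB ?hbB ?ctxB ?ctxA ?ctxB2 ?ax ?jB ?jSP ?jm (m := mQp j + 2 + mE j) ?hm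
  case dis => rintro ⟨x, y⟩ ⟨⟨h1, h1', _⟩, _⟩ ⟨h2', _, _⟩; omega
  case haA => omega
  case hbA => rw [h2]; omega
  case haB => omega
  case hbB => rw [h2]; omega
  case ctxB => rintro ⟨x, y⟩ ⟨h2', _, _⟩; right; left; omega
  case ctxA => intro y hy; right; right; exact hy
  case ctxB2 =>
    intro y hy; simp only [List.mem_singleton] at hy; subst hy; left; omega
  case ax => right; rfl
  case jB =>
    rintro ⟨x, y⟩ ⟨h2', _, _⟩
    rw [shiftP_mk, lb_row_eval (c := 2) (by ring) (by norm_num)]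
    exact le_lb_right (by omega)
  case jSP =>
    intro y hy; simp only [List.mem_singleton] at hy; subst hy
    rw [shiftP_mk, lb_row_eval (c := 2) (by ring) (by norm_num)]
    exact le_lb_left (by omega)
  case jm =>
    rw [shiftP_mk]
    constructor
    · rw [lb_row_eval (c := 2) (by ring) (by norm_num)]; omega
    · rw [lb_row_eval (c := 2) (by ring) (by norm_num)]; rw [h2]; omega
  case hm => rw [shiftP_mk, dist1_row_eval (c := 2) (by ring) (by norm_num)]
  show Piece ((QpL j ++ shiftL (8*2^j - 1) (EL j)) ++ [((0:ℤ),(1:ℤ))]) _ _ _ _ _ _ _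
  refine piece_cast (glue_ret hmid ?hq ?hqsp ?hax ?hjm ?hSP ?hm2) rfl ?pred rfl rfl rfl
  case hq =>
    rintro ⟨x, y⟩ (⟨⟨h1, h1', _⟩, h4⟩ | ⟨h1', _, _⟩) hp
    · exact h4 hp
    · rw [Prod.mk.injEq] at hp; omega
  case hqsp => exact List.mem_singleton.mpr rfl
  case hax => right; rfl
  case hjm =>
    rw [shiftP_mk]
    constructor
    · rw [lb_row_eval' (c := 8*2^j - 1) (by ring) (by omega)]; omega
    · rw [lb_row_eval' (c := 8*2^j - 1) (by ring) (by omega)]; rw [h2]; omega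
  case hSP => intro y hy; simpa using hy
  case hm2 =>
    rw [shiftP_mk, dist1_row_eval' (c := 8*2^j - 1) (by ring) (by omega)]
    unfold mQp mE mEp
    push_cast [pow_succ]
    ring
  case pred =>
    rintro ⟨x, y⟩
    simp only [full, ne_eq, Prod.mk.injEq, not_and]
    rw [h2]
    constructor
    · rintro ((⟨⟨u1, u2, u3⟩, u4⟩ | ⟨u1, u2, u3⟩) | h)
      · exact ⟨by omega, by omega, u3⟩
      · exact ⟨by omega, by omega, by omega⟩
      · exact ⟨by omega, by omega, by omega⟩
    · rintro ⟨u1, u2, u3⟩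
      rcases le_or_gt x (8*2^j - 2) with h | h
      · by_cases h01 : x = 0 ∧ y = 1
        · right; omega
        · left; left; exact ⟨⟨by omega, by omega, u3⟩, by tauto⟩
      · left; right; exact ⟨by omega, by omega, by omega⟩

lemma pEpestep {j : ℕ} (hQp : PQp j) (hEp : PEp j) : PEpe (j+1) := by
  have hz : (0:ℤ) < 2^j := pow_pos (by norm_num) j
  have h2 : ((2:ℤ))^(j+1) = 2^j * 2 := pow_succ 2 j
  have hEsh := piece_shift (8*2^j - 1) hEp
  have hmid := piece_glue (SP := [((0:ℤ),(1:ℤ))]) (a := -1) (c := 8*2^(j+1) - 2) hQp hEsh ?dis ?haA ?hbA ?haB ?hbB ?ctxB ?ctxA ?ctxB2 ?ax ?jB ?jSP ?jm (m := mQp j + 2 + mEp j) ?hm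
  case dis => rintro ⟨x, y⟩ ⟨⟨h1, h1', _⟩, _⟩ ⟨h2', _, _⟩; omega
  case haA => omega
  case hbA => rw [h2]; omega
  case haB => omega
  case hbB => rw [h2]; omega
  case ctxB => rintro ⟨x, y⟩ ⟨h2', _, _⟩; right; left; omega
  case ctxA => intro y hy; right; right; exact hy
  case ctxB2 =>
    intro y hy; simp only [List.mem_singleton] at hy; subst hy; left; omega
  case ax => right; rfl
  case jB =>
    rintro ⟨x, y⟩ ⟨h2', _, _⟩
    rw [shiftP_mk, lb_row_eval (c := 2) (by ring) (by norm_num)]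
    exact le_lb_right (by omega)
  case jSP =>
    intro y hy; simp only [List.mem_singleton] at hy; subst hy
    rw [shiftP_mk, lb_row_eval (c := 2) (by ring) (by norm_num)]
    exact le_lb_left (by omega)
  case jm =>
    rw [shiftP_mk]
    constructor
    · rw [lb_row_eval (c := 2) (by ring) (by norm_num)]; omega
    · rw [lb_row_eval (c := 2) (by ring) (by norm_num)]; rw [h2]; omega
  case hm => rw [shiftP_mk, dist1_row_eval (c := 2) (by ring) (by norm_num)]
  show Piece ((QpL j ++ shiftL (8*2^j - 1) (EpL j)) ++ [((0:ℤ),(1:ℤ))]) _ _ _ _ _ _ _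
  refine piece_cast (glue_ret hmid ?hq ?hqsp ?hax ?hjm ?hSP ?hm2) rfl ?pred rfl rfl rfl
  case hq =>
    rintro ⟨x, y⟩ (⟨⟨h1, h1', _⟩, h4⟩ | ⟨h1', _, _⟩) hp
    · exact h4 hp
    · rw [Prod.mk.injEq] at hp; omega
  case hqsp => exact List.mem_singleton.mpr rfl
  case hax => right; rfl
  case hjm =>
    rw [shiftP_mk]
    constructor
    · rw [lb_row_eval' (c := 8*2^j - 1) (by ring) (by omega)]; omega
    · rw [lb_row_eval' (c := 8*2^j - 1) (by ring) (by omega)]; rw [h2]; omega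
  case hSP => intro y hy; simpa using hy
  case hm2 =>
    rw [shiftP_mk, dist1_row_eval' (c := 8*2^j - 1) (by ring) (by omega)]
    unfold mQp mEp mEpe
    push_cast [pow_succ]
    ring
  case pred =>
    rintro ⟨x, y⟩
    simp only [full, ne_eq, Prod.mk.injEq, not_and]
    rw [h2]
    constructor
    · rintro ((⟨⟨u1, u2, u3⟩, u4⟩ | ⟨u1, u2, u3⟩) | h)
      · exact ⟨by omega, by omega, u3⟩
      · exact ⟨by omega, by omega, by omega⟩
      · exact ⟨by omega, by omega, by omega⟩
    · rintro ⟨u1, u2, u3⟩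
      rcases le_or_gt x (8*2^j - 2) with h | h
      · by_cases h01 : x = 0 ∧ y = 1
        · right; omega
        · left; left; exact ⟨⟨by omega, by omega, u3⟩, by tauto⟩
      · left; right; exact ⟨by omega, by omega, by omega⟩

lemma pRstep {j : ℕ} (hP : PP j) (hE : PE j) : PR (j+1) := by
  have hz : (0:ℤ) < 2^j := pow_pos (by norm_num) j
  have h2 : ((2:ℤ))^(j+1) = 2^j * 2 := pow_succ 2 j
  have hEsh := piece_shift (8*2^j) hE
  have hmid := piece_glue (SP := [((1:ℤ),(1:ℤ))]) (a := -1) (c := 8*2^(j+1)) hP hEsh ?dis ?haA ?hbA ?haB ?hbB ?ctxB ?ctxA ?ctxB2 ?ax ?jB ?jSP ?jm (m := mP j + 2 + mE j) ?hm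
  case dis => rintro ⟨x, y⟩ ⟨⟨h1, h1', _⟩, _⟩ ⟨h2', _, _⟩; omega
  case haA => omega
  case hbA => rw [h2]; omega
  case haB => omega
  case hbB => rw [h2]; omega
  case ctxB => rintro ⟨x, y⟩ ⟨h2', _, _⟩; right; left; omega
  case ctxA => intro y hy; right; right; exact hy
  case ctxB2 =>
    intro y hy; simp only [List.mem_singleton] at hy; subst hy; left; omega
  case ax => right; rfl
  case jB =>
    rintro ⟨x, y⟩ ⟨h2', _, _⟩
    rw [shiftP_mk, lb_row_eval (c := 2) (by ring) (by norm_num)]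
    exact le_lb_right (by omega)
  case jSP =>
    intro y hy; simp only [List.mem_singleton] at hy; subst hy
    rw [shiftP_mk, lb_row_eval (c := 2) (by ring) (by norm_num)]
    exact le_lb_left (by omega)
  case jm =>
    rw [shiftP_mk]
    constructor
    · rw [lb_row_eval (c := 2) (by ring) (by norm_num)]; omega
    · rw [lb_row_eval (c := 2) (by ring) (by norm_num)]; rw [h2]; omega
  case hm => rw [shiftP_mk, dist1_row_eval (c := 2) (by ring) (by norm_num)]
  show Piece ((PL j ++ shiftL (8*2^j) (EL j)) ++ [((1:ℤ),(1:ℤ))]) _ _ _ _ _ _ _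
  refine piece_sp (piece_cast (glue_ret hmid ?hq ?hqsp ?hax ?hjm ?hSP ?hm2) rfl ?pred rfl rfl rfl) (by simp)
  case hq =>
    rintro ⟨x, y⟩ (⟨⟨h1, h1', _⟩, h4⟩ | ⟨h1', _, _⟩) hp
    · exact h4 hp
    · rw [Prod.mk.injEq] at hp; omega
  case hqsp => exact List.mem_singleton.mpr rfl
  case hax => right; rfl
  case hjm =>
    rw [shiftP_mk]
    constructor
    · rw [lb_row_eval' (c := 8*2^j - 1) (by ring) (by omega)]; omega
    · rw [lb_row_eval' (c := 8*2^j - 1) (by ring) (by omega)]; rw [h2]; omega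
  case hSP => intro y hy; simpa using hy
  case hm2 =>
    rw [shiftP_mk, dist1_row_eval' (c := 8*2^j - 1) (by ring) (by omega)]
    unfold mP mE mR
    push_cast [pow_succ]
    ring
  case pred =>
    rintro ⟨x, y⟩
    simp only [full, ne_eq, Prod.mk.injEq, not_and]
    rw [h2]
    constructor
    · rintro ((⟨⟨u1, u2, u3⟩, u4⟩ | ⟨u1, u2, u3⟩) | h)
      · exact ⟨by omega, by omega, u3⟩
      · exact ⟨by omega, by omega, by omega⟩
      · exact ⟨by omega, by omega, by omega⟩
    · rintro ⟨u1, u2, u3⟩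
      rcases le_or_gt x (8*2^j - 1) with h | h
      · by_cases h01 : x = 1 ∧ y = 1
        · right; omega
        · left; left; exact ⟨⟨by omega, by omega, u3⟩, by tauto⟩
      · left; right; exact ⟨by omega, by omega, by omega⟩

lemma pTstep {k : ℕ} (hT : PT k) (hR : PR k) : PT (k+1) := by
  have hz : (0:ℤ) < 2^k := pow_pos (by norm_num) k
  have h2 : ((2:ℤ))^(k+1) = 2^k * 2 := pow_succ 2 k
  have hRsh := piece_shift (8*2^k - 3) hR
  show Piece (TL k ++ shiftL (8*2^k - 3) (RL k)) _ _ _ _ _ _ _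
  refine piece_cast (piece_glue (SP := []) (a := -1) (c := 8*2^(k+1) - 3) hT hRsh ?dis ?haA ?hbA ?haB ?hbB ?ctxB ?ctxA ?ctxB2 ?ax ?jB ?jSP ?jm ?hm) rfl ?pred rfl ?last rfl
  case dis => rintro ⟨x, y⟩ ⟨h1, h1', _⟩ ⟨h2', _, _⟩; omega
  case haA => omega
  case hbA => rw [h2]; omega
  case haB => omega
  case hbB => rw [h2]; omega
  case ctxB => rintro ⟨x, y⟩ ⟨h2', _, _⟩; right; left; omega
  case ctxA => intro y hy; simp at hy
  case ctxB2 => intro y hy; simp at hy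
  case ax => right; rfl
  case jB =>
    rintro ⟨x, y⟩ ⟨h2', _, _⟩
    rw [shiftP_mk, lb_row_eval (c := 4*2^k - 1) (by ring) (by omega)]
    exact le_lb_right (by omega)
  case jSP => intro y hy; simp at hy
  case jm =>
    rw [shiftP_mk]
    constructor
    · rw [lb_row_eval (c := 4*2^k - 1) (by ring) (by omega)]; omega
    · rw [lb_row_eval (c := 4*2^k - 1) (by ring) (by omega)]; rw [h2]; omega
  case hm =>
    rw [shiftP_mk, dist1_row_eval (c := 4*2^k - 1) (by ring) (by omega)]
    unfold mT mR
    push_cast [pow_succ]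
    ring
  case pred =>
    rintro ⟨x, y⟩
    simp only [full]
    rw [h2]
    constructor
    · rintro (⟨u1, u2, u3⟩ | ⟨u1, u2, u3⟩)
      · exact ⟨by omega, by omega, u3⟩
      · exact ⟨by omega, by omega, by omega⟩
    · rintro ⟨u1, u2, u3⟩
      rcases le_or_gt x (8*2^k - 4) with h | h
      · left; exact ⟨by omega, by omega, u3⟩
      · right; exact ⟨by omega, by omega, by omega⟩
  case last => rw [shiftP_mk]; exact Prod.ext (by rw [h2]; ring) rfl


/-! ### Base cases in family form -/

lemma pQ0 : PQ 0 := by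
  refine piece_cast (piece_castab piece_Q1 rfl (by norm_num)) rfl (fun p => by norm_num) rfl (by norm_num) rfl

lemma pQp0 : PQp 0 := by
  refine piece_cast (piece_castab piece_Qp1 rfl (by norm_num)) rfl (fun p => by norm_num) rfl (by norm_num) rfl

lemma pP0 : PP 0 := by
  refine piece_cast (piece_castab piece_P1 rfl (by norm_num)) rfl (fun p => by norm_num) rfl (by norm_num) rfl

lemma pE0 : PE 0 := by
  refine piece_cast (piece_castab piece_E1 rfl (by norm_num)) rfl (fun p => by norm_num) rfl rfl rfl

lemma pEp0 : PEp 0 := by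
  refine piece_cast (piece_castab piece_Ep1 rfl (by norm_num)) rfl (fun p => by norm_num) rfl rfl rfl

lemma pEpe0 : PEpe 0 := by
  refine piece_cast (piece_castab piece_Epe1 rfl (by norm_num)) rfl (fun p => by norm_num) rfl rfl rfl

lemma pR0 : PR 0 := by
  refine piece_cast (piece_castab piece_R0 rfl (by norm_num)) rfl (fun p => by norm_num) rfl rfl rfl

lemma pT0 : PT 0 := by
  refine piece_cast (piece_castab piece_T0 rfl (by norm_num)) rfl (fun p => by norm_num) rfl (by norm_num) rfl

/-! ### The full induction -/

lemma all6 : ∀ j, PQ j ∧ PQp j ∧ PP j ∧ PE j ∧ PEp j ∧ PEpe j := by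
  intro j
  induction j with
  | zero => exact ⟨pQ0, pQp0, pP0, pE0, pEp0, pEpe0⟩
  | succ j ih =>
    obtain ⟨hQ, hQp, hP, hE, hEp, hEpe⟩ := ih
    have hS : PS j := pS hEpe
    exact ⟨pQstep hQ hS, pQpstep hQp hS, pPstep hP hS, pEstep hQ hE,
      pEpstep hQp hE, pEpestep hQp hEp⟩

lemma pRall : ∀ j, PR j
  | 0 => pR0
  | (j+1) => pRstep (all6 j).2.2.1 (all6 j).2.2.2.1

lemma pTall : ∀ k, PT k
  | 0 => pT0
  | (k+1) => pTstep (pTall k) (pRall k)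

/-! ### lengths -/

lemma length_shiftL (t : ℤ) (l : List Pt) : (shiftL t l).length = l.length := List.length_map _

lemma length_tail0 : tail0.length = 4 := rfl

lemma lengths : ∀ j, (QL j).length = 16*2^j - 1 ∧ (QpL j).length = 16*2^j - 3 ∧
    (EL j).length = 16*2^j ∧ (EpL j).length = 16*2^j - 2 ∧ (EpeL j).length = 16*2^j - 4 := by
  intro j
  induction j with
  | zero => exact ⟨rfl, rfl, rfl, rfl, rfl⟩
  | succ j ih =>
    obtain ⟨h1, h2, h3, h4, h5⟩ := ih
    have hp : (2:ℕ)^j ≥ 1 := Nat.one_le_two_pow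
    have hq : (16:ℕ)*2^(j+1) = 32*2^j := by rw [pow_succ]; ring
    have hsl : (SL j).length = 16*2^j := by
      show (EpeL j ++ shiftL (8*2^j - 2 : ℤ) tail0).length = _
      rw [List.length_append, h5, length_shiftL, length_tail0]; omega
    refine ⟨?_, ?_, ?_, ?_, ?_⟩
    · show (QL j ++ shiftL (8*2^j : ℤ) (SL j)).length = _
      rw [List.length_append, h1, length_shiftL, hsl, hq]; omega
    · show (QpL j ++ shiftL (8*2^j - 1 : ℤ) (SL j)).length = _
      rw [List.length_append, h2, length_shiftL, hsl, hq]; omega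
    · show (QL j ++ shiftL (8*2^j : ℤ) (EL j) ++ [((0:ℤ),(1:ℤ))]).length = _
      rw [List.length_append, List.length_append, h1, length_shiftL, h3, hq]
      simp only [List.length_singleton]; omega
    · show (QpL j ++ shiftL (8*2^j - 1 : ℤ) (EL j) ++ [((0:ℤ),(1:ℤ))]).length = _
      rw [List.length_append, List.length_append, h2, length_shiftL, h3, hq]
      simp only [List.length_singleton]; omega
    · show (QpL j ++ shiftL (8*2^j - 1 : ℤ) (EpL j) ++ [((0:ℤ),(1:ℤ))]).length = _
      rw [List.length_append, List.length_append, h2, length_shiftL, h4, hq]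
      simp only [List.length_singleton]; omega

lemma length_SL (j : ℕ) : (SL j).length = 16*2^j := by
  show (EpeL j ++ shiftL (8*2^j - 2 : ℤ) tail0).length = _
  rw [List.length_append, (lengths j).2.2.2.2, length_shiftL, length_tail0]
  have : (2:ℕ)^j ≥ 1 := Nat.one_le_two_pow
  omega

lemma length_PL : ∀ j, (PL j).length = 16*2^j - 1
  | 0 => rfl
  | (j+1) => by
      show (PL j ++ shiftL (8*2^j : ℤ) (SL j)).length = _
      rw [List.length_append, length_PL j, length_shiftL, length_SL j]
      have : (2:ℕ)^j ≥ 1 := Nat.one_le_two_pow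
      rw [pow_succ]
      omega

lemma length_RL : ∀ j, (RL j).length = 16*2^j
  | 0 => rfl
  | (j+1) => by
      show (PL j ++ shiftL (8*2^j : ℤ) (EL j) ++ [((1:ℤ),(1:ℤ))]).length = _
      rw [List.length_append, List.length_append, length_PL j, length_shiftL, (lengths j).2.2.1]
      have : (2:ℕ)^j ≥ 1 := Nat.one_le_two_pow
      simp only [List.length_singleton]
      rw [pow_succ]
      omega

lemma length_TL : ∀ k, (TL k).length = 16*2^k - 6
  | 0 => rfl
  | (k+1) => by
      show (TL k ++ shiftL (8*2^k - 3 : ℤ) (RL k)).length = _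
      rw [List.length_append, length_TL k, length_shiftL, length_RL k]
      have : (2:ℕ)^k ≥ 1 := Nat.one_le_two_pow
      rw [pow_succ]
      omega


/-! ### indexed consequences -/

lemma nnok_index : ∀ (l P : List Pt), NNok l P → ∀ i, i + 1 < l.length →
    (((l.getD i (0,0)).1 = (l.getD (i+1) (0,0)).1 ∨ (l.getD i (0,0)).2 = (l.getD (i+1) (0,0)).2) ∧
     ∀ y, (y ∈ l.drop (i+1) ∨ y ∈ P) →
       lb (l.getD i (0,0)) (l.getD (i+1) (0,0)) ≤ lb (l.getD i (0,0)) y)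
  | [], _, _, i, hi => by simp at hi
  | [a], _, _, i, hi => by simp at hi
  | a :: b :: t, P, h, 0, hi => by
      obtain ⟨⟨hax, hy⟩, h2⟩ := h
      refine ⟨hax, ?_⟩
      intro y hy'
      apply hy
      rcases hy' with hy' | hy'
      · have h3 : y ∈ b :: t := hy'
        simp only [List.mem_cons, List.mem_append] at h3 ⊢
        tauto
      · simp [hy']
  | a :: b :: t, P, h, (i+1), hi => by
      obtain ⟨_, h2⟩ := h
      have := nnok_index (b :: t) P h2 i (by simpa using hi)
      exact this

lemma plen_sum : ∀ l : List Pt,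
    plen l = ∑ i ∈ Finset.range (l.length - 1), dist1 (l.getD i (0,0)) (l.getD (i+1) (0,0))
  | [] => by simp [plen]
  | [a] => by simp [plen]
  | a :: b :: t => by
      have ih := plen_sum (b :: t)
      show dist1 a b + plen (b :: t) = _
      have hlen : (a :: b :: t).length - 1 = ((b :: t).length - 1) + 1 := by
        simp [List.length_cons]
      rw [hlen, Finset.sum_range_succ']
      have hstep : ∀ i, dist1 ((a :: b :: t).getD (i+1) (0,0)) ((a :: b :: t).getD (i+2) (0,0))
          = dist1 ((b :: t).getD i (0,0)) ((b :: t).getD (i+1) (0,0)) := fun i => rfl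
      simp only [hstep]
      rw [← ih]
      show dist1 a b + plen (b :: t) = plen (b :: t) + dist1 ((a::b::t).getD 0 (0,0)) ((a::b::t).getD 1 (0,0))
      show dist1 a b + plen (b :: t) = plen (b :: t) + dist1 a b
      ring

lemma getD_head : ∀ (l : List Pt) (p : Pt), l.head? = some p → l.getD 0 (0,0) = p
  | [], p, h => by simp at h
  | a :: t, p, h => by simpa using h

lemma getD_last : ∀ (l : List Pt) (p : Pt), l.getLast? = some p → l.getD (l.length - 1) (0,0) = p
  | [], p, h => by simp at h
  | [a], p, h => by simpa using h
  | a :: b :: t, p, h => by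
      have h' : (b :: t).getLast? = some p := by rw [← h]; rfl
      have := getD_last (b :: t) p h'
      show (a :: b :: t).getD ((b :: t).length - 1 + 1) (0,0) = p
      rwa [List.getD_cons_succ]

lemma mem_drop_of_getElem {l : List Pt} {i j : ℕ} (hj : j < l.length) (hij : i + 1 ≤ j) :
    l[j] ∈ l.drop (i+1) := by
  have h1 : j - (i+1) < (l.drop (i+1)).length := by
    rw [List.length_drop]; omega
  have h2 : (l.drop (i+1))[j - (i+1)] = l[j] := by
    rw [List.getElem_drop]
    congr 1
    omega
  rw [← h2]
  exact List.getElem_mem h1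

end NNRproof

open NNRproof

/-- For any metric `d` on the `2 × (8·2^k − 3)` grid `V_k` satisfying
(i) distances along a common row or column are the euclidean (= rectilinear) ones, and
(ii) all distances dominate the horizontal difference, there is a partial nearest-neighbor
tour through all of `V_k` starting at `(0,0)`, ending at `(4·2^k − 2, 1)`, of total length
`(12 + 4k)·2^k − 3`. -/
theorem nnr_partial_tour_general_metric (k : ℕ) (n : ℕ) (hn : n = 16 * 2 ^ k - 6)
    (V : Set (ℤ × ℤ))
    (hV : V = {p : ℤ × ℤ | 0 ≤ p.1 ∧ p.1 ≤ 8 * 2 ^ k - 4 ∧ (p.2 = 0 ∨ p.2 = 1)})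
    (d : ℤ × ℤ → ℤ × ℤ → ℝ)
    (hsymm : ∀ p ∈ V, ∀ q ∈ V, d p q = d q p)
    (htri : ∀ p ∈ V, ∀ q ∈ V, ∀ r ∈ V, d p r ≤ d p q + d q r)
    (hzero : ∀ p ∈ V, ∀ q ∈ V, (d p q = 0 ↔ p = q))
    (haxis : ∀ p ∈ V, ∀ q ∈ V, (p.1 = q.1 ∨ p.2 = q.2) →
      d p q = |(p.1 : ℝ) - (q.1 : ℝ)| + |(p.2 : ℝ) - (q.2 : ℝ)|)
    (hlow : ∀ p ∈ V, ∀ q ∈ V, |(p.1 : ℝ) - (q.1 : ℝ)| ≤ d p q) :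
    ∃ x : ℕ → ℤ × ℤ,
      (∀ i < n, x i ∈ V) ∧
      (∀ i < n, ∀ j < n, x i = x j → i = j) ∧
      (∀ p ∈ V, ∃ i < n, x i = p) ∧
      x 0 = (0, 0) ∧
      x (n - 1) = (4 * 2 ^ k - 2, 1) ∧
      (∀ i < n - 1, ∀ y ∈ V, (∀ j ≤ i, x j ≠ y) →
        d (x i) (x (i + 1)) ≤ d (x i) y) ∧
      ∑ i ∈ Finset.range (n - 1), d (x i) (x (i + 1))
        = (12 + 4 * (k : ℝ)) * 2 ^ k - 3 := by
  obtain ⟨hhead, hlast, hnodup, hmem, hplen, hnnok, -⟩ := pTall k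
  set l : List Pt := TL k with hl
  have hnk : (1:ℕ) ≤ 2^k := Nat.one_le_two_pow
  have hzk : (0:ℤ) < 2^k := pow_pos (by norm_num) k
  have hlen : l.length = n := by rw [length_TL, hn]
  have hVmem : ∀ p : ℤ × ℤ, p ∈ l ↔ p ∈ V := by
    intro p
    rw [hmem p, hV]
    simp only [full, Set.mem_setOf_eq]
    constructor
    · rintro ⟨h1, h2, h3⟩; exact ⟨h1, by omega, h3⟩
    · rintro ⟨h1, h2, h3⟩; exact ⟨h1, by omega, h3⟩
  have hn10 : 10 ≤ n := by omega
  -- the tour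
  refine ⟨fun i => l.getD i (0,0), ?_, ?_, ?_, ?_, ?_, ?_, ?_⟩
  · -- membership
    intro i hi
    show l.getD i (0,0) ∈ V
    rw [List.getD_eq_getElem l (0,0) (by omega : i < l.length)]
    exact (hVmem _).1 (List.getElem_mem _)
  · -- injectivity
    intro i hi j hj hij
    have hij' : l.getD i (0,0) = l.getD j (0,0) := hij
    rw [List.getD_eq_getElem l (0,0) (by omega : i < l.length),
      List.getD_eq_getElem l (0,0) (by omega : j < l.length)] at hij'
    exact (List.Nodup.getElem_inj_iff hnodup).1 hij'
  · -- surjectivity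
    intro p hp
    obtain ⟨i, hi, hip⟩ := List.mem_iff_getElem.1 ((hVmem p).2 hp)
    exact ⟨i, by omega, by show l.getD i (0,0) = p; rw [List.getD_eq_getElem l (0,0) hi]; exact hip⟩
  · exact getD_head l _ hhead
  · show l.getD (n-1) (0,0) = _
    rw [← hlen]; exact getD_last l _ hlast
  · -- nearest neighbour property
    intro i hi y hy hyvis
    show d (l.getD i (0,0)) (l.getD (i+1) (0,0)) ≤ d (l.getD i (0,0)) y
    have hi1 : i + 1 < l.length := by omega
    obtain ⟨hax, hstepmin⟩ := nnok_index l [] hnnok i hi1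
    set p := l.getD i (0,0) with hp
    set q := l.getD (i+1) (0,0) with hq
    have hpV : p ∈ V := by
      rw [hp, List.getD_eq_getElem l (0,0) (by omega : i < l.length)]
      exact (hVmem _).1 (List.getElem_mem _)
    have hqV : q ∈ V := by
      rw [hq, List.getD_eq_getElem l (0,0) hi1]
      exact (hVmem _).1 (List.getElem_mem _)
    -- y is in the suffix
    obtain ⟨jy, hjy, hjyp⟩ := List.mem_iff_getElem.1 ((hVmem y).2 hy)
    have hjyi : i + 1 ≤ jy := by
      by_contra hcon
      exact hyvis jy (by omega) (by
        show l.getD jy (0,0) = y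
        rw [List.getD_eq_getElem l (0,0) hjy]; exact hjyp)
    have hydrop : y ∈ l.drop (i+1) := by
      rw [← hjyp]; exact mem_drop_of_getElem hjy hjyi
    have hkey : lb p q ≤ lb p y := hstepmin y (Or.inl hydrop)
    -- translate to the metric d
    have hdstep : d p q = ((lb p q : ℤ) : ℝ) := by
      rw [haxis p hpV q hqV hax]
      unfold lb
      rw [if_pos hax]
      unfold dist1
      push_cast
      ring
    have hdy : ((lb p y : ℤ) : ℝ) ≤ d p y := by
      by_cases haxy : p.1 = y.1 ∨ p.2 = y.2
      · rw [haxis p hpV y hy haxy]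
        unfold lb
        rw [if_pos haxy]
        unfold dist1
        push_cast
        ring_nf
        exact le_refl _
      · unfold lb
        rw [if_neg haxy]
        have := hlow p hpV y hy
        push_cast
        exact this
    rw [hdstep]
    calc ((lb p q : ℤ) : ℝ) ≤ ((lb p y : ℤ) : ℝ) := by exact_mod_cast hkey
      _ ≤ d p y := hdy
  · -- total length
    show (∑ i ∈ Finset.range (n - 1), d (l.getD i (0,0)) (l.getD (i+1) (0,0))) = _
    have hterm : ∀ i ∈ Finset.range (n - 1),
        d (l.getD i (0,0)) (l.getD (i+1) (0,0))
          = ((dist1 (l.getD i (0,0)) (l.getD (i+1) (0,0)) : ℤ) : ℝ) := by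
      intro i hi
      rw [Finset.mem_range] at hi
      have hi1 : i + 1 < l.length := by omega
      obtain ⟨hax, -⟩ := nnok_index l [] hnnok i hi1
      have hpV : l.getD i (0,0) ∈ V := by
        rw [List.getD_eq_getElem l (0,0) (by omega : i < l.length)]
        exact (hVmem _).1 (List.getElem_mem _)
      have hqV : l.getD (i+1) (0,0) ∈ V := by
        rw [List.getD_eq_getElem l (0,0) hi1]
        exact (hVmem _).1 (List.getElem_mem _)
      rw [haxis _ hpV _ hqV hax]
      unfold dist1
      push_cast
      ring
    rw [Finset.sum_congr rfl hterm]
    rw [← Int.cast_sum]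
    have : ∑ i ∈ Finset.range (n - 1), dist1 (l.getD i (0,0)) (l.getD (i+1) (0,0)) = mT k := by
      rw [← hplen, plen_sum l, hlen]
    rw [this]
    unfold mT
    push_cast
    ring
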